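/- Let the applicants be partitioned into two types A^1 (of size n_1) and A^2 (of size n_2), suppose every applicant-company pair is mutually acceptable, and let L^1, L^2 be exact overall type quotas satisfying L^1 ≤ n_1, L^2 ≤ n_2 and L^1 + L^2 = U, where U is the sum of the upper quotas u_j over all companies. Then there exists an integer e and a matching M that is weakly stable for the instance obtained by adding e to the score s_{ij} of every type-1 applicant a_i at every company c_j (leaving type-2 scores unchanged), such that exactly L^1 type-1 applicants and exactly L^2 type-2 applicants are matched in M. -/

import Mathlib

open Finset

variable {A C : Type*} [Fintype A] [DecidableEq A] [Fintype C] [DecidableEq C]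

/-- `M` is a matching w.r.t. the acceptable pairs `E` and the upper quotas `u`. -/
def IsMatching (E : Finset (A × C)) (u : C → ℕ) (M : Finset (A × C)) : Prop :=
  M ⊆ E ∧ (∀ a : A, (M.filter (fun p => p.1 = a)).card ≤ 1) ∧
    ∀ c : C, (M.filter (fun p => p.2 = c)).card ≤ u c

/-- `(a, c) ∈ E \ M` weakly blocks `M` (w.r.t. scores `s`). -/
def WeaklyBlocks (E : Finset (A × C)) (u : C → ℕ) (pref : A → C → ℕ) (s : A → C → ℤ)
    (M : Finset (A × C)) (a : A) (c : C) : Prop :=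
  (a, c) ∈ E ∧ (a, c) ∉ M ∧ (∀ c', (a, c') ∈ M → pref a c < pref a c') ∧
    ((M.filter (fun p => p.2 = c)).card < u c ∨ ∃ h : A, (h, c) ∈ M ∧ s h c < s a c)

/-- `M` is weakly stable: no pair weakly blocks it. -/
def WeaklyStable (E : Finset (A × C)) (u : C → ℕ) (pref : A → C → ℕ) (s : A → C → ℤ)
    (M : Finset (A × C)) : Prop :=
  ∀ (a : A) (c : C), ¬ WeaklyBlocks E u pref s M a c

set_option linter.unusedSectionVars false
set_option maxHeartbeats 1000000

section HRT

variable {A C : Type*} [Fintype A] [DecidableEq A] [Fintype C] [DecidableEq C]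

def cntHRT (g : A → Option C) (c : C) : ℕ := (univ.filter fun a => g a = some c).card
def matchedHRT (g : A → Option C) : Finset A := univ.filter fun a => g a ≠ none
def T1HRT (t1 : Finset A) (g : A → Option C) : ℕ := ((matchedHRT g) ∩ t1).card
def prefHRT (pref : A → C → ℕ) (a : A) (c : C) (o : Option C) : Prop :=
  ∀ c', o = some c' → pref a c < pref a c'
def GStable (u : C → ℕ) (pref : A → C → ℕ) (κ : A → C → ℤ) (g : A → Option C) : Prop :=
  ∀ a c, g a ≠ some c → prefHRT pref a c (g a) →
    u c ≤ cntHRT g c ∧ ∀ h, g h = some c → κ a c < κ h c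
def FullHRT (u : C → ℕ) (g : A → Option C) : Prop := ∀ c, cntHRT g c = u c
def φHRT (pref : A → C → ℕ) (g : A → Option C) (a : A) : ℕ := (g a).elim 0 (pref a)
def PMHRT (pref : A → C → ℕ) : ℕ := 1 + (univ : Finset (A × C)).sup (fun p => pref p.1 p.2)

lemma cnt_upd_same {g : A → Option C} {b : A} {o : Option C} {c : C}
    (h1 : g b = some c ↔ o = some c) : cntHRT (Function.update g b o) c = cntHRT g c := by
  unfold cntHRT
  congr 1
  apply Finset.filter_congr
  intro a _
  rcases eq_or_ne a b with rfl | hab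
  · simp [Function.update_self, h1]
  · simp [Function.update_of_ne hab]

lemma cnt_upd_add {g : A → Option C} {b : A} {c : C}
    (h1 : g b ≠ some c) : cntHRT (Function.update g b (some c)) c = cntHRT g c + 1 := by
  unfold cntHRT
  have : (univ.filter fun a => Function.update g b (some c) a = some c)
      = insert b (univ.filter fun a => g a = some c) := by
    ext a
    rcases eq_or_ne a b with rfl | hab
    · simp [Function.update_self]
    · simp [Function.update_of_ne hab, hab]
  rw [this, Finset.card_insert_of_notMem (by simp [h1])]

lemma cnt_upd_sub {g : A → Option C} {b : A} {o : Option C} {c : C}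
    (h1 : g b = some c) (h2 : o ≠ some c) :
    cntHRT (Function.update g b o) c + 1 = cntHRT g c := by
  unfold cntHRT
  have : (univ.filter fun a => g a = some c)
      = insert b (univ.filter fun a => Function.update g b o a = some c) := by
    ext a
    rcases eq_or_ne a b with rfl | hab
    · simp [Function.update_self, h1, h2]
    · simp [Function.update_of_ne hab, hab]
  rw [this, Finset.card_insert_of_notMem (by simp [Function.update_self, h2])]

lemma matched_upd_some {g : A → Option C} {b : A} {c : C} :
    matchedHRT (Function.update g b (some c)) = insert b (matchedHRT g) := by
  ext a
  rcases eq_or_ne a b with rfl | hab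
  · simp [matchedHRT, Function.update_self]
  · simp [matchedHRT, Function.update_of_ne hab, hab]

lemma matched_upd_none {g : A → Option C} {b : A} :
    matchedHRT (Function.update g b none) = (matchedHRT g).erase b := by
  ext a
  rcases eq_or_ne a b with rfl | hab
  · simp [matchedHRT, Function.update_self]
  · simp [matchedHRT, Function.update_of_ne hab, hab]

lemma T1_upd_some (t1 : Finset A) {g : A → Option C} {b : A} {c : C} (hb : g b = none) :
    T1HRT t1 (Function.update g b (some c)) = T1HRT t1 g + (if b ∈ t1 then 1 else 0) := by
  unfold T1HRT
  rw [matched_upd_some]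
  by_cases ht : b ∈ t1
  · rw [Finset.insert_inter_of_mem ht, Finset.card_insert_of_notMem (by simp [matchedHRT, hb]),
      if_pos ht]
  · rw [Finset.insert_inter_of_notMem ht, if_neg ht, add_zero]

lemma T1_upd_none (t1 : Finset A) {g : A → Option C} {b : A} {c : C} (hb : g b = some c) :
    T1HRT t1 (Function.update g b none) + (if b ∈ t1 then 1 else 0) = T1HRT t1 g := by
  unfold T1HRT
  rw [matched_upd_none]
  by_cases ht : b ∈ t1
  · rw [if_pos ht, Finset.erase_inter]
    have hmem : b ∈ matchedHRT g ∩ t1 := by simp [matchedHRT, hb, ht]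
    rw [Finset.card_erase_of_mem hmem]
    have : 1 ≤ (matchedHRT g ∩ t1).card := Finset.card_pos.mpr ⟨b, hmem⟩
    omega
  · rw [if_neg ht, add_zero, Finset.erase_inter, Finset.erase_eq_of_notMem (by simp [ht])]

lemma sum_cnt (g : A → Option C) : ∑ c, cntHRT g c = (matchedHRT g).card := by
  classical
  unfold cntHRT matchedHRT
  rw [Finset.card_filter]
  simp only [Finset.card_filter]
  rw [Finset.sum_comm]
  apply Finset.sum_congr rfl
  intro a _
  cases hga : g a with
  | none => simp [hga]
  | some c0 => simp [hga, Finset.sum_ite_eq' univ c0 (fun _ => 1)]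

lemma pref_lt_PM (pref : A → C → ℕ) (a : A) (c : C) : pref a c < PMHRT pref := by
  have : pref a c ≤ (univ : Finset (A × C)).sup (fun p => pref p.1 p.2) :=
    Finset.le_sup (f := fun p : A × C => pref p.1 p.2) (mem_univ (a, c))
  unfold PMHRT; omega

lemma measure_bound (pref : A → C → ℕ) (g : A → Option C) (t : ℕ) (f : A) (c₀ : C)
    (ht : t ≤ pref f c₀) :
    t + ∑ a, φHRT pref g a + (Fintype.card A + 1) ≤ (Fintype.card A + 1) * PMHRT pref := by
  have hPM : 1 ≤ PMHRT pref := by unfold PMHRT; omega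
  have h1 : t ≤ PMHRT pref - 1 := by have := pref_lt_PM pref f c₀; omega
  have h2 : ∑ a, φHRT pref g a ≤ ∑ _a : A, (PMHRT pref - 1) := by
    apply Finset.sum_le_sum
    intro a _
    unfold φHRT
    cases hga : g a with
    | none => simp
    | some c => simp only [Option.elim]; have := pref_lt_PM pref a c; omega
  rw [Finset.sum_const, smul_eq_mul] at h2
  have hcard : (univ : Finset A).card = Fintype.card A := rfl
  rw [hcard] at h2
  set n := Fintype.card A
  set P := PMHRT pref
  have h3 : t + ∑ a, φHRT pref g a ≤ (P - 1) + n * (P - 1) := by omega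
  have h4 : (P - 1) + n * (P - 1) + (n + 1) = (n + 1) * P := by
    have hP1 : P - 1 + 1 = P := by omega
    calc (P - 1) + n * (P - 1) + (n + 1) = (n + 1) * ((P - 1) + 1) := by ring
    _ = (n + 1) * P := by rw [hP1]
  omega

lemma phi_upd (pref : A → C → ℕ) (g : A → Option C) (b : A) (o : Option C) :
    φHRT pref (Function.update g b o) = Function.update (φHRT pref g) b (o.elim 0 (pref b)) := by
  funext a
  rcases eq_or_ne a b with rfl | h
  · simp [φHRT]
  · simp [φHRT, Function.update_of_ne h]

lemma phi_sum_upd (pref : A → C → ℕ) (g : A → Option C) (b : A) (o : Option C) :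
    ∑ a, φHRT pref (Function.update g b o) a + φHRT pref g b
      = ∑ a, φHRT pref g a + (o.elim 0 (pref b)) := by
  have h1 : ∑ a, φHRT pref (Function.update g b o) a
      = o.elim 0 (pref b) + ∑ x ∈ univ \ {b}, φHRT pref g x := by
    rw [phi_upd, Finset.sum_update_of_mem (mem_univ b)]
  have h2 : φHRT pref g b + ∑ x ∈ univ \ {b}, φHRT pref g x = ∑ a, φHRT pref g a := by
    rw [← Finset.erase_eq]
    exact Finset.add_sum_erase _ _ (mem_univ b)
  omega

variable (u : C → ℕ) (pref : A → C → ℕ) (t1 : Finset A) (κ : A → C → ℤ)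

theorem phase2 (hκ : ∀ c a b, κ a c = κ b c → a = b)
    (hpi : ∀ a c c', pref a c = pref a c' → c = c') (N : ℕ) :
    ∀ (g : A → Option C) (v : Option C) (f : A) (t : ℕ),
    ((Fintype.card A + 1) * PMHRT pref ≤ N + (t + ∑ a, φHRT pref g a)) →
    g f = none →
    (∀ a c, a ≠ f → g a ≠ some c → prefHRT pref a c (g a) →
        ∀ h, g h = some c → κ a c < κ h c) →
    (∀ c, pref f c < t → ∀ h, g h = some c → κ f c < κ h c) →
    (∀ c, v ≠ some c → cntHRT g c = u c) →
    (∀ c, v = some c → cntHRT g c + 1 = u c) →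
    (∀ c, v = some c → t ≤ pref f c) →
    (∀ c, v = some c → ∀ a, a ≠ f →
        g a ≠ none ∧ ∀ c', g a = some c' → ¬ pref a c < pref a c') →
    ∃ g', GStable u pref κ g' ∧ FullHRT u g' ∧
      T1HRT t1 g + (if f ∈ t1 then 1 else 0) ≤ T1HRT t1 g' + 1 ∧
      T1HRT t1 g' ≤ T1HRT t1 g + (if f ∈ t1 then 1 else 0) + (if v = none then 0 else 1) := by
  induction N using Nat.strong_induction_on with
  | _ N ih =>
  intro g v f t hmeas hgf H1 H2 H3a H3b H6 H7
  by_cases hR : (univ.filter fun c => t ≤ pref f c) = ∅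
  · -- exhausted floater: terminal state
    have hnoR : ∀ c, pref f c < t := by
      intro c
      by_contra hc
      have : c ∈ univ.filter fun c => t ≤ pref f c := by simp; omega
      simp [hR] at this
    have hv : v = none := by
      cases hvv : v with
      | none => rfl
      | some c => exact absurd (H6 c hvv) (by have := hnoR c; omega)
    refine ⟨g, ?_, fun c => H3a c (by rw [hv]; simp), ?_, ?_⟩
    · intro a c hga hpref
      refine ⟨by rw [H3a c (by rw [hv]; simp)], ?_⟩
      intro h hh
      rcases eq_or_ne f a with rfl | haf
      · exact H2 c (hnoR c) h hh
      · exact H1 a c (Ne.symm haf) hga hpref h hh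
    · by_cases hf : f ∈ t1 <;> simp [hf]
    · by_cases hf : f ∈ t1 <;> simp [hf] <;> omega
  · -- the floater has a favourite remaining company c₀
    have hRne : (univ.filter fun c => t ≤ pref f c).Nonempty := Finset.nonempty_iff_ne_empty.mpr hR
    obtain ⟨c₀, hc₀R, hc₀min⟩ := Finset.exists_min_image _ (pref f) hRne
    have htc₀ : t ≤ pref f c₀ := by simpa using hc₀R
    have hminR : ∀ c, t ≤ pref f c → pref f c₀ ≤ pref f c := by
      intro c hc; exact hc₀min c (by simpa using hc)
    have hNpos : 1 ≤ N := by
      have := measure_bound pref g t f c₀ htc₀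
      by_contra h
      have hN : N = 0 := by omega
      rw [hN] at hmeas
      omega
    by_cases hful : cntHRT g c₀ < u c₀
    · -- c₀ has a free slot: it is the vacancy; insert f there, terminal
      have hv : v = some c₀ := by
        by_contra hvv
        have := H3a c₀ hvv
        omega
      set g' := Function.update g f (some c₀) with hg'
      have hg'f : g' f = some c₀ := by simp [hg']
      have hg'a : ∀ a, a ≠ f → g' a = g a := by
        intro a ha; simp [hg', Function.update_of_ne ha]
      have hcnt'c₀ : cntHRT g' c₀ = cntHRT g c₀ + 1 := cnt_upd_add (by rw [hgf]; simp)
      have hcnt' : ∀ c, c ≠ c₀ → cntHRT g' c = cntHRT g c := by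
        intro c hc
        exact cnt_upd_same (by rw [hgf]; simp [Ne.symm hc])
      have hT1 : T1HRT t1 g' = T1HRT t1 g + (if f ∈ t1 then 1 else 0) := T1_upd_some t1 hgf
      refine ⟨g', ?_, ?_, by omega, by rw [hT1, hv]; simp⟩
      · intro a c hgac hpref
        rcases eq_or_ne f a with rfl | haf
        · have hcc₀ : c ≠ c₀ := by
            intro e
            rw [e] at hgac
            exact hgac hg'f
          have hpfc : pref f c < pref f c₀ := hpref c₀ hg'f
          refine ⟨by rw [hcnt' c hcc₀, H3a c (by rw [hv]; simp [Ne.symm hcc₀])], ?_⟩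
          intro h hh
          have hhf : h ≠ f := by
            intro e; rw [e, hg'f] at hh
            exact hcc₀ (Option.some.inj hh).symm
          rw [hg'a h hhf] at hh
          by_cases hct : pref f c < t
          · exact H2 c hct h hh
          · exact absurd (hminR c (by omega)) (by omega)
        · rw [hg'a a (Ne.symm haf)] at hgac hpref
          obtain ⟨hnone, hnopref⟩ := H7 c₀ hv a (Ne.symm haf)
          cases hga : g a with
          | none => exact absurd hga hnone
          | some c2 =>
            have hpa : pref a c < pref a c2 := hpref c2 hga
            have hcc₀ : c ≠ c₀ := by
              intro e; rw [e] at hpa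
              exact (hnopref c2 hga) hpa
            refine ⟨by rw [hcnt' c hcc₀, H3a c (by rw [hv]; simp [Ne.symm hcc₀])], ?_⟩
            intro h hh
            have hhf : h ≠ f := by
              intro e; rw [e, hg'f] at hh
              exact hcc₀ (Option.some.inj hh).symm
            rw [hg'a h hhf] at hh
            exact H1 a c (Ne.symm haf) hgac hpref h hh
      · intro c
        rcases eq_or_ne c₀ c with rfl | hc
        · rw [hcnt'c₀, H3b c₀ hv]
        · rw [hcnt' c (Ne.symm hc), H3a c (by rw [hv]; simp [hc])]
    · -- c₀ is full
      by_cases hbeat : ∃ h, g h = some c₀ ∧ κ h c₀ < κ f c₀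
      · -- floater beats the weakest assignee m of c₀: insert f, evict m
        obtain ⟨h₀, hh₀1, hh₀2⟩ := hbeat
        obtain ⟨m, hmAS, hmmin⟩ := Finset.exists_min_image
          (univ.filter fun h => g h = some c₀) (fun h => κ h c₀) ⟨h₀, by simp [hh₀1]⟩
        have hgm : g m = some c₀ := by simpa using hmAS
        have hmf : m ≠ f := by
          intro e; rw [e, hgf] at hgm; exact nomatch hgm
        have hκmf : κ m c₀ < κ f c₀ :=
          lt_of_le_of_lt (hmmin h₀ (by simp [hh₀1])) hh₀2
        set gmid := Function.update g m none with hgmid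
        set g₁ := Function.update gmid f (some c₀) with hg₁
        have hg₁f : g₁ f = some c₀ := by simp [hg₁]
        have hg₁m : g₁ m = none := by
          rw [hg₁, Function.update_of_ne hmf, hgmid, Function.update_self]
        have hg₁x : ∀ x, x ≠ f → x ≠ m → g₁ x = g x := by
          intro x hxf hxm
          rw [hg₁, Function.update_of_ne hxf, hgmid, Function.update_of_ne hxm]
        have hass : ∀ h c, g₁ h = some c ↔ ((f = h ∧ c₀ = c) ∨ (h ≠ f ∧ h ≠ m ∧ g h = some c)) := by
          intro h c
          rcases eq_or_ne h f with rfl | hhf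
          · rw [hg₁f]
            constructor
            · intro e; exact Or.inl ⟨rfl, Option.some.inj e⟩
            · rintro (⟨-, rfl⟩ | ⟨hne, -⟩)
              · rfl
              · exact absurd rfl hne
          · rcases eq_or_ne h m with rfl | hhm
            · rw [hg₁m]; simp [Ne.symm hhf]
            · rw [hg₁x h hhf hhm]
              constructor
              · intro e; exact Or.inr ⟨hhf, hhm, e⟩
              · rintro (⟨e1, -⟩ | ⟨-, -, e⟩)
                · exact absurd e1.symm hhf
                · exact e
        have hcnt₁ : ∀ c, cntHRT g₁ c = cntHRT g c := by
          intro c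
          rcases eq_or_ne c₀ c with rfl | hcc
          · have h1 : cntHRT gmid c₀ + 1 = cntHRT g c₀ := cnt_upd_sub hgm (by simp)
            have h2 : cntHRT g₁ c₀ = cntHRT gmid c₀ + 1 := by
              apply cnt_upd_add
              rw [hgmid, Function.update_of_ne (Ne.symm hmf), hgf]
              simp
            omega
          · have h1 : cntHRT gmid c = cntHRT g c := by
              apply cnt_upd_same
              rw [hgm]; simp [hcc]
            have h2 : cntHRT g₁ c = cntHRT gmid c := by
              apply cnt_upd_same
              rw [hgmid, Function.update_of_ne (Ne.symm hmf), hgf]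
              simp [hcc]
            omega
        have hφm : φHRT pref g m = pref m c₀ := by simp [φHRT, hgm]
        have hφmidf : φHRT pref gmid f = 0 := by
          rw [hgmid]
          unfold φHRT
          rw [Function.update_of_ne (Ne.symm hmf), hgf]
          rfl
        have hsum1 := phi_sum_upd pref g m none
        have hsum2 := phi_sum_upd pref gmid f (some c₀)
        rw [← hgmid] at hsum1
        rw [← hg₁] at hsum2
        simp only [Option.elim] at hsum1 hsum2
        rw [hφm] at hsum1
        rw [hφmidf] at hsum2
        have hmeas₁ : (Fintype.card A + 1) * PMHRT pref
            ≤ (N - 1) + ((pref m c₀ + 1) + ∑ a, φHRT pref g₁ a) := by omega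
        have HH1 : ∀ a c, a ≠ m → g₁ a ≠ some c → prefHRT pref a c (g₁ a) →
            ∀ h, g₁ h = some c → κ a c < κ h c := by
          intro a c ham hgac hpref h hh
          rw [hass] at hh
          rcases hh with ⟨rfl, rfl⟩ | ⟨hhf, hhm, hh⟩
          · rcases eq_or_ne f a with rfl | haf
            · exact absurd hg₁f hgac
            · have hg₁a : g₁ a = g a := hg₁x a (Ne.symm haf) ham
              rw [hg₁a] at hgac hpref
              exact (H1 a c₀ (Ne.symm haf) hgac hpref m hgm).trans hκmf
          · rcases eq_or_ne f a with rfl | haf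
            · have hpfc : pref f c < pref f c₀ := hpref c₀ hg₁f
              by_cases hct : pref f c < t
              · exact H2 c hct h hh
              · exact absurd (hminR c (by omega)) (by omega)
            · have hg₁a : g₁ a = g a := hg₁x a (Ne.symm haf) ham
              rw [hg₁a] at hgac hpref
              exact H1 a c (Ne.symm haf) hgac hpref h hh
        have HH2 : ∀ c, pref m c < pref m c₀ + 1 → ∀ h, g₁ h = some c → κ m c < κ h c := by
          intro c hc h hh
          rw [hass] at hh
          rcases hh with ⟨rfl, rfl⟩ | ⟨hhf, hhm, hh⟩
          · exact hκmf
          · rcases eq_or_ne c₀ c with rfl | hcc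
            · have hle : κ m c₀ ≤ κ h c₀ := hmmin h (by simp [hh])
              have hne : κ m c₀ ≠ κ h c₀ := fun e => hhm (hκ c₀ m h e).symm
              exact lt_of_le_of_ne hle hne
            · have hcm : pref m c < pref m c₀ := by
                have hle : pref m c ≤ pref m c₀ := by omega
                rcases lt_or_eq_of_le hle with hlt | heq
                · exact hlt
                · exact absurd (hpi m c c₀ heq).symm hcc
              refine H1 m c hmf (by rw [hgm]; simp [hcc]) ?_ h hh
              intro c' hc'
              rw [hgm] at hc'
              rw [← Option.some.inj hc']
              exact hcm
        have HH6 : ∀ c, v = some c → pref m c₀ + 1 ≤ pref m c := by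
          intro c hvc
          have hcc₀ : c ≠ c₀ := by
            intro e; rw [e] at hvc
            have := H3b c₀ hvc
            omega
          have hnp := (H7 c hvc m hmf).2 c₀ hgm
          have hne : pref m c ≠ pref m c₀ := fun e => hcc₀ (hpi m c c₀ e)
          omega
        have HH7 : ∀ c, v = some c → ∀ a, a ≠ m →
            g₁ a ≠ none ∧ ∀ c', g₁ a = some c' → ¬ pref a c < pref a c' := by
          intro c hvc a ham
          rcases eq_or_ne f a with rfl | haf
          · refine ⟨by rw [hg₁f]; simp, ?_⟩
            intro c' hc'
            rw [hg₁f] at hc'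
            rw [← Option.some.inj hc']
            have hcR : t ≤ pref f c := H6 c hvc
            have := hminR c hcR
            omega
          · rw [hg₁x a (Ne.symm haf) ham]
            exact H7 c hvc a (Ne.symm haf)
        obtain ⟨g', hst, hfull, hlo, hhi⟩ := ih (N - 1) (by omega) g₁ v m (pref m c₀ + 1)
          hmeas₁ hg₁m HH1 HH2 (fun c hc => (hcnt₁ c) ▸ H3a c hc) (fun c hc => (hcnt₁ c) ▸ H3b c hc)
          HH6 HH7
        refine ⟨g', hst, hfull, ?_, ?_⟩
        · have e1 : T1HRT t1 gmid + (if m ∈ t1 then 1 else 0) = T1HRT t1 g := T1_upd_none t1 hgm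
          have e2 : T1HRT t1 g₁ = T1HRT t1 gmid + (if f ∈ t1 then 1 else 0) := by
            apply T1_upd_some
            rw [hgmid, Function.update_of_ne (Ne.symm hmf), hgf]
          omega
        · have e1 : T1HRT t1 gmid + (if m ∈ t1 then 1 else 0) = T1HRT t1 g := T1_upd_none t1 hgm
          have e2 : T1HRT t1 g₁ = T1HRT t1 gmid + (if f ∈ t1 then 1 else 0) := by
            apply T1_upd_some
            rw [hgmid, Function.update_of_ne (Ne.symm hmf), hgf]
          omega
      · -- the floater is rejected by c₀
        have hmeas₁ : (Fintype.card A + 1) * PMHRT pref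
            ≤ (N - 1) + ((pref f c₀ + 1) + ∑ a, φHRT pref g a) := by omega
        refine ih (N - 1) (by omega) g v f (pref f c₀ + 1) hmeas₁ hgf H1 ?_ H3a H3b ?_ H7
        · intro c hc h hh
          rcases eq_or_ne c₀ c with rfl | hcc
          · have hle : κ f c₀ ≤ κ h c₀ := not_lt.mp (fun hlt => hbeat ⟨h, hh, hlt⟩)
            have hne : κ f c₀ ≠ κ h c₀ := by
              intro e
              rw [← hκ c₀ f h e] at hh
              rw [hgf] at hh
              exact nomatch hh
            exact lt_of_le_of_ne hle hne
          · have hlt : pref f c < pref f c₀ := by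
              have hle : pref f c ≤ pref f c₀ := by omega
              rcases lt_or_eq_of_le hle with hlt | heq
              · exact hlt
              · exact absurd (hpi f c c₀ heq).symm hcc
            by_cases hct : pref f c < t
            · exact H2 c hct h hh
            · exact absurd (hminR c (by omega)) (by omega)
        · intro c hvc
          have hcc₀ : c ≠ c₀ := by
            intro e; rw [e] at hvc
            have := H3b c₀ hvc
            omega
          have h1 : t ≤ pref f c := H6 c hvc
          have h2 := hminR c h1
          have hne : pref f c ≠ pref f c₀ := fun e => hcc₀ (hpi f c c₀ e)
          omega


theorem phase1 (hκ : ∀ c a b, κ a c = κ b c → a = b)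
    (hpi : ∀ a c c', pref a c = pref a c' → c = c') (N : ℕ) :
    ∀ (g : A → Option C) (v : C) (fop : Option A),
    (∑ a, (g a).elim (PMHRT pref) (pref a) ≤ N) →
    (∑ c, u c ≤ Fintype.card A) →
    (∀ f, fop = some f → g f = none) →
    (∀ a c, fop ≠ some a → g a ≠ some c → prefHRT pref a c (g a) →
        ∀ h, g h = some c → κ a c < κ h c) →
    (∀ c, c ≠ v → cntHRT g c = u c) →
    (cntHRT g v + 1 = u v) →
    ∃ g', GStable u pref κ g' ∧ FullHRT u g' ∧
      T1HRT t1 g + (fop.elim 0 fun f => if f ∈ t1 then 1 else 0) ≤ T1HRT t1 g' + 1 ∧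
      T1HRT t1 g' ≤ T1HRT t1 g + (fop.elim 0 fun f => if f ∈ t1 then 1 else 0) + 1 := by
  induction N using Nat.strong_induction_on with
  | _ N ih =>
  intro g v fop hmeas hU hf H1 H3a H3b
  by_cases hS : (univ.filter fun a => fop ≠ some a ∧ (g a = none ∨
      ∃ c', g a = some c' ∧ pref a v < pref a c')) = ∅
  · -- no one (non-exempt) wants the vacancy
    have hSmem : ∀ a, fop ≠ some a →
        g a ≠ none ∧ ∀ c', g a = some c' → ¬ pref a v < pref a c' := by
      intro a ha
      constructor
      · intro hnone
        have : a ∈ univ.filter fun a => fop ≠ some a ∧ (g a = none ∨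
            ∃ c', g a = some c' ∧ pref a v < pref a c') := by
          simp only [mem_filter, mem_univ, true_and]
          exact ⟨ha, Or.inl hnone⟩
        rw [hS] at this
        exact absurd this (Finset.notMem_empty a)
      · intro c' hc' hlt
        have : a ∈ univ.filter fun a => fop ≠ some a ∧ (g a = none ∨
            ∃ c', g a = some c' ∧ pref a v < pref a c') := by
          simp only [mem_filter, mem_univ, true_and]
          exact ⟨ha, Or.inr ⟨c', hc', hlt⟩⟩
        rw [hS] at this
        exact absurd this (Finset.notMem_empty a)
    cases hfop : fop with
    | none =>
      -- impossible: some applicant is unmatched and would join v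
      exfalso
      have huc : ∀ c, u c = cntHRT g c + (if c = v then 1 else 0) := by
        intro c
        by_cases hc : c = v
        · subst hc; simp; omega
        · rw [if_neg hc, add_zero, H3a c hc]
      have hsumu : ∑ c, u c = (matchedHRT g).card + 1 := by
        rw [← sum_cnt]
        calc ∑ c, u c = ∑ c, (cntHRT g c + (if c = v then 1 else 0)) :=
              Finset.sum_congr rfl (fun c _ => huc c)
        _ = ∑ c, cntHRT g c + ∑ c, (if c = v then 1 else 0) := Finset.sum_add_distrib
        _ = ∑ c, cntHRT g c + 1 := by rw [Finset.sum_ite_eq' univ v (fun _ => 1)]; simp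
      have hcm : (matchedHRT g).card ≤ Fintype.card A := by
        apply Finset.card_le_card
        intro x _
        exact mem_univ x
      have hlt : (matchedHRT g).card < Fintype.card A := by omega
      have : ∃ a, g a = none := by
        by_contra h
        push_neg at h
        have he : matchedHRT g = univ := by
          ext a; simp [matchedHRT, h a]
        rw [he, Finset.card_univ] at hlt
        omega
      obtain ⟨a, hga⟩ := this
      exact ((hSmem a (by rw [hfop]; simp)).1) hga
    | some f =>
      -- switch to the floater phase
      rw [hfop] at hf hSmem H1
      have hgf : g f = none := hf f rfl
      obtain ⟨g', hst, hfull, hlo, hhi⟩ := phase2 u pref t1 κ hκ hpi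
        ((Fintype.card A + 1) * PMHRT pref) g (some v) f 0
        (by omega) hgf
        (fun a c ha => H1 a c (by simp [Ne.symm ha]))
        (fun c hc => absurd hc (by omega))
        (fun c hc => H3a c (fun e => hc (by rw [e])))
        (fun c hc => by rw [← Option.some.inj hc]; exact H3b)
        (fun c _ => Nat.zero_le _)
        (fun c hc a ha => by
          have := hSmem a (by simp [Ne.symm ha])
          rw [← Option.some.inj hc]
          exact this)
      refine ⟨g', hst, hfull, ?_, ?_⟩
      · simp only [Option.elim]
        exact hlo
      · simp only [Option.elim]
        rw [if_neg (by simp : ¬(some v : Option C) = none)] at hhi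
        exact hhi
  · -- someone wants the vacancy: recall the best of them
    have hSne : (univ.filter fun a => fop ≠ some a ∧ (g a = none ∨
        ∃ c', g a = some c' ∧ pref a v < pref a c')).Nonempty :=
      Finset.nonempty_iff_ne_empty.mpr hS
    obtain ⟨b, hbS, hbmax⟩ := Finset.exists_max_image _ (fun a => κ a v) hSne
    have hbS' : fop ≠ some b ∧ (g b = none ∨ ∃ c', g b = some c' ∧ pref b v < pref b c') := by
      simpa using hbS
    have hmax : ∀ a, fop ≠ some a → (g a = none ∨ ∃ c', g a = some c' ∧ pref a v < pref a c') →
        κ a v ≤ κ b v := by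
      intro a ha hw
      exact hbmax a (by simp only [mem_filter, mem_univ, true_and]; exact ⟨ha, hw⟩)
    set g₁ := Function.update g b (some v) with hg₁
    have hg₁b : g₁ b = some v := by simp [hg₁]
    have hg₁x : ∀ x, x ≠ b → g₁ x = g x := by
      intro x hx; simp [hg₁, Function.update_of_ne hx]
    -- dominance for the updated matching
    have hdomv : ∀ a c, fop ≠ some a → g₁ a ≠ some c → prefHRT pref a c (g₁ a) →
        ∀ h, g₁ h = some c → κ a c < κ h c := by
      intro a c ha hgac hpref h hh
      rcases eq_or_ne b h with rfl | hhb
      · -- h = b: c = v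
        rw [hg₁b] at hh
        obtain rfl : v = c := Option.some.inj hh
        have hab : a ≠ b := by
          intro e; rw [e] at hgac; exact hgac hg₁b
        have hga : g₁ a = g a := hg₁x a hab
        rw [hga] at hgac hpref
        have hwant : g a = none ∨ ∃ c', g a = some c' ∧ pref a v < pref a c' := by
          cases hgaa : g a with
          | none => exact Or.inl rfl
          | some c2 => exact Or.inr ⟨c2, rfl, hpref c2 hgaa⟩
        have hle := hmax a ha hwant
        have hne : κ a v ≠ κ b v := fun e => hab (hκ v a b e)
        omega
      · rw [hg₁x h (Ne.symm hhb)] at hh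
        rcases eq_or_ne b a with rfl | hab
        · -- a = b moved up to v
          rw [hg₁b] at hpref
          have hpbc : pref b c < pref b v := hpref v rfl
          rcases hbS'.2 with hnone | ⟨c', hc', hlt⟩
          · refine H1 b c hbS'.1 (by rw [hnone]; simp) ?_ h hh
            intro x hx
            rw [hnone] at hx
            exact absurd hx (by simp)
          · refine H1 b c hbS'.1 ?_ ?_ h hh
            · rw [hc']
              intro e
              rw [← Option.some.inj e] at hpbc
              omega
            · intro x hx
              rw [hc'] at hx
              rw [← Option.some.inj hx]
              omega
        · have hga : g₁ a = g a := hg₁x a (Ne.symm hab)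
          rw [hga] at hgac hpref
          exact H1 a c ha hgac hpref h hh
    rcases hbS'.2 with hbnone | ⟨c', hgbc', hblt⟩
    · -- b was unmatched: vacancy filled
      have hcntv : cntHRT g₁ v = u v := by
        rw [cnt_upd_add (by rw [hbnone]; simp)]; omega
      have hcnt1 : ∀ c, c ≠ v → cntHRT g₁ c = cntHRT g c := by
        intro c hc
        exact cnt_upd_same (by rw [hbnone]; simp [Ne.symm hc])
      have hfull₁ : FullHRT u g₁ := by
        intro c
        rcases eq_or_ne c v with rfl | hc
        · exact hcntv
        · rw [hcnt1 c hc, H3a c hc]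
      have hT1₁ : T1HRT t1 g₁ = T1HRT t1 g + (if b ∈ t1 then 1 else 0) := T1_upd_some t1 hbnone
      cases hfop : fop with
      | none =>
        rw [hfop] at hdomv
        refine ⟨g₁, ?_, hfull₁, ?_, ?_⟩
        · intro a c hgac hpref
          exact ⟨le_of_eq (hfull₁ c).symm, hdomv a c (by simp) hgac hpref⟩
        · simp only [Option.elim]
          omega
        · simp only [Option.elim]
          rw [hT1₁]
          split <;> omega
      | some f =>
        rw [hfop] at hf hdomv
        have hfb : f ≠ b := by
          intro e
          apply hbS'.1
          rw [hfop, e]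
        have hg₁f : g₁ f = none := by rw [hg₁x f hfb, hf f rfl]
        obtain ⟨g', hst, hfull, hlo, hhi⟩ := phase2 u pref t1 κ hκ hpi
          ((Fintype.card A + 1) * PMHRT pref) g₁ none f 0
          (by omega) hg₁f
          (fun a c ha => hdomv a c (by simp [Ne.symm ha]))
          (fun c hc => absurd hc (by omega))
          (fun c _ => hfull₁ c)
          (fun c hc => absurd hc (by simp))
          (fun c hc => absurd hc (by simp))
          (fun c hc => absurd hc (by simp))
        refine ⟨g', hst, hfull, ?_, ?_⟩
        · simp only [Option.elim]
          rw [hT1₁] at hlo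
          omega
        · simp only [Option.elim]
          rw [if_pos rfl] at hhi
          rw [hT1₁] at hhi
          by_cases hb : b ∈ t1
          · rw [if_pos hb] at hhi; omega
          · rw [if_neg hb] at hhi; omega
    · -- b was matched to c': the vacancy moves to c'
      have hvc' : v ≠ c' := by
        intro e; rw [← e] at hblt
        omega
      have hcntv : cntHRT g₁ v = u v := by
        rw [cnt_upd_add (by rw [hgbc']; intro e; exact hvc' (Option.some.inj e).symm)]
        omega
      have hcntc' : cntHRT g₁ c' + 1 = cntHRT g c' := by
        apply cnt_upd_sub hgbc'
        intro e
        exact hvc' (Option.some.inj e)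
      have hcnt1 : ∀ c, c ≠ v → c ≠ c' → cntHRT g₁ c = cntHRT g c := by
        intro c hc hc2
        apply cnt_upd_same
        rw [hgbc']
        constructor
        · intro e; exact absurd (Option.some.inj e) (Ne.symm hc2)
        · intro e; exact absurd (Option.some.inj e) (Ne.symm hc)
      have hmeas₁ : ∑ a, (g₁ a).elim (PMHRT pref) (pref a) < N := by
        have hφb : (g₁ b).elim (PMHRT pref) (pref b) < (g b).elim (PMHRT pref) (pref b) := by
          rw [hg₁b, hgbc']
          simpa using hblt
        have hmono : ∀ a, (g₁ a).elim (PMHRT pref) (pref a) ≤ (g a).elim (PMHRT pref) (pref a) := by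
          intro a
          rcases eq_or_ne a b with rfl | hab
          · exact le_of_lt hφb
          · rw [hg₁x a hab]
        have : ∑ a, (g₁ a).elim (PMHRT pref) (pref a) < ∑ a, (g a).elim (PMHRT pref) (pref a) :=
          Finset.sum_lt_sum (fun a _ => hmono a) ⟨b, mem_univ b, hφb⟩
        omega
      have hf₁ : ∀ f, fop = some f → g₁ f = none := by
        intro f hfo
        have hfb : f ≠ b := by
          intro e
          apply hbS'.1
          rw [hfo, e]
        rw [hg₁x f hfb]
        exact hf f hfo
      have hT1₁ : T1HRT t1 g₁ = T1HRT t1 g := by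
        unfold T1HRT
        rw [hg₁, matched_upd_some, Finset.insert_eq_self.mpr (by simp [matchedHRT, hgbc'])]
      obtain ⟨g', hst, hfull, hlo, hhi⟩ := ih (∑ a, (g₁ a).elim (PMHRT pref) (pref a))
        (by omega) g₁ c' fop (le_refl _) hU hf₁ hdomv
        (fun c hc => by
          rcases eq_or_ne c v with rfl | hcv
          · exact hcntv
          · rw [hcnt1 c hcv hc, H3a c hcv])
        (by rw [hcntc']; exact H3a c' (Ne.symm hvc'))
      rw [hT1₁] at hlo hhi
      exact ⟨g', hst, hfull, hlo, hhi⟩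


theorem existsStable (hκ : ∀ c a b, κ a c = κ b c → a = b)
    (hpi : ∀ a c c', pref a c = pref a c' → c = c') :
    ∀ (N : ℕ) (u : C → ℕ), ∑ c, u c ≤ Fintype.card A → ∑ c, u c ≤ N →
    ∃ g, GStable u pref κ g ∧ FullHRT u g := by
  intro N
  induction N with
  | zero =>
    intro u hU h0
    have hu : ∀ c, u c = 0 := by
      intro c
      have : u c ≤ ∑ c, u c := Finset.single_le_sum (fun c _ => Nat.zero_le _) (mem_univ c)
      omega
    refine ⟨fun _ => none, ?_, ?_⟩
    · intro a c _ _
      constructor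
      · rw [hu c]; exact Nat.zero_le _
      · intro h hh; exact absurd hh (by simp)
    · intro c
      rw [hu c]
      unfold cntHRT
      simp
  | succ N ihN =>
    intro u hU hN
    by_cases h0 : ∑ c, u c = 0
    · have hu : ∀ c, u c = 0 := by
        intro c
        have : u c ≤ ∑ c, u c := Finset.single_le_sum (fun c _ => Nat.zero_le _) (mem_univ c)
        omega
      refine ⟨fun _ => none, ?_, ?_⟩
      · intro a c _ _
        constructor
        · rw [hu c]; exact Nat.zero_le _
        · intro h hh; exact absurd hh (by simp)
      · intro c
        rw [hu c]
        unfold cntHRT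
        simp
    · -- pick a company with positive capacity, reduce it by one
      have : ∃ c₀, 0 < u c₀ := by
        by_contra h
        push_neg at h
        exact h0 (Finset.sum_eq_zero (fun c _ => by have := h c; omega))
      obtain ⟨c₀, hc₀⟩ := this
      set u' := Function.update u c₀ (u c₀ - 1) with hu'
      have hsum' : ∑ c, u' c + 1 = ∑ c, u c := by
        rw [hu']
        rw [Finset.sum_update_of_mem (mem_univ c₀)]
        rw [← Finset.add_sum_erase _ u (mem_univ c₀), Finset.erase_eq]
        omega
      obtain ⟨g, hst, hfull⟩ := ihN u' (by omega) (by omega)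
      obtain ⟨g', hst', hfull', _, _⟩ := phase1 u pref (∅ : Finset A) κ hκ hpi
        (∑ a, (g a).elim (PMHRT pref) (pref a)) g c₀ none (le_refl _) hU
        (fun f hf => nomatch hf)
        (fun a c _ hga hpref h hh => (hst a c hga hpref).2 h hh)
        (fun c hc => by
          rw [hfull c, hu', Function.update_of_ne hc])
        (by rw [hfull c₀, hu', Function.update_self]; omega)
      exact ⟨g', hst', hfull'⟩

theorem stableSwap (u : C → ℕ) (pref : A → C → ℕ) (t1 : Finset A) (κ κ' : A → C → ℤ)
    (hκ' : ∀ c a b, κ' a c = κ' b c → a = b)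
    (hpi : ∀ a c c', pref a c = pref a c' → c = c') (y : A)
    (hagree : ∀ a c, a ≠ y → κ' a c = κ a c)
    (hU : ∑ c, u c ≤ Fintype.card A)
    (g : A → Option C) (hst : GStable u pref κ g) (hfull : FullHRT u g) :
    ∃ g', GStable u pref κ' g' ∧ FullHRT u g' ∧
      T1HRT t1 g ≤ T1HRT t1 g' + 1 ∧ T1HRT t1 g' ≤ T1HRT t1 g + 1 := by
  cases hy : g y with
  | none =>
    -- y is unmatched: rerun the floater phase for y under the new priorities
    obtain ⟨g', hst', hfull', hlo, hhi⟩ := phase2 u pref t1 κ' hκ' hpi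
      ((Fintype.card A + 1) * PMHRT pref) g none y 0
      (by omega) hy
      (fun a c hay hgac hpref h hh => by
        have hhy : h ≠ y := by
          intro e; rw [e, hy] at hh; exact nomatch hh
        rw [hagree a c hay, hagree h c hhy]
        exact (hst a c hgac hpref).2 h hh)
      (fun c hc => absurd hc (by omega))
      (fun c _ => hfull c)
      (fun c hc => absurd hc (by simp))
      (fun c hc => absurd hc (by simp))
      (fun c hc => absurd hc (by simp))
    refine ⟨g', hst', hfull', ?_, ?_⟩
    · split at hlo <;> omega
    · rw [if_pos rfl] at hhi
      split at hhi <;> omega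
  | some cy =>
    -- y is matched: remove y, creating a vacancy, and restabilize
    set g₀ := Function.update g y none with hg₀
    have hg₀y : g₀ y = none := by simp [hg₀]
    have hg₀x : ∀ x, x ≠ y → g₀ x = g x := by
      intro x hx; simp [hg₀, Function.update_of_ne hx]
    have hT1₀ : T1HRT t1 g₀ + (if y ∈ t1 then 1 else 0) = T1HRT t1 g := T1_upd_none t1 hy
    obtain ⟨g', hst', hfull', hlo, hhi⟩ := phase1 u pref t1 κ' hκ' hpi
      (∑ a, (g₀ a).elim (PMHRT pref) (pref a)) g₀ cy (some y) (le_refl _) hU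
      (fun f hf => by rw [← Option.some.inj hf]; exact hg₀y)
      (fun a c ha hgac hpref h hh => by
        have hay : a ≠ y := fun e => ha (by rw [e])
        have hhy : h ≠ y := by
          intro e; rw [e, hg₀y] at hh; exact nomatch hh
        rw [hg₀x a hay] at hgac hpref
        rw [hg₀x h hhy] at hh
        rw [hagree a c hay, hagree h c hhy]
        exact (hst a c hgac hpref).2 h hh)
      (fun c hc => by
        rw [cnt_upd_same (by rw [hy]; simp [Ne.symm hc]), hfull c])
      (by
        have := cnt_upd_sub (o := none) hy (by simp)
        rw [← hg₀] at this
        rw [this, hfull cy])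
    refine ⟨g', hst', hfull', ?_, ?_⟩
    · simp only [Option.elim] at hlo
      omega
    · simp only [Option.elim] at hhi
      omega


def MofHRT (g : A → Option C) : Finset (A × C) := univ.filter (fun p => g p.1 = some p.2)

lemma Mof_mem {g : A → Option C} {p : A × C} : p ∈ MofHRT g ↔ g p.1 = some p.2 := by
  simp [MofHRT]

lemma Mof_cnt (g : A → Option C) (c : C) :
    ((MofHRT g).filter fun p => p.2 = c).card = cntHRT g c := by
  unfold cntHRT
  apply Finset.card_bij (fun p _ => p.1)
  · intro p hp
    simp only [mem_filter, mem_univ, true_and]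
    have h1 : g p.1 = some p.2 := Mof_mem.mp (Finset.mem_filter.mp hp).1
    have h2 : p.2 = c := (Finset.mem_filter.mp hp).2
    rw [← h2]; exact h1
  · intro p hp q hq he
    have h1 : g p.1 = some p.2 := Mof_mem.mp (Finset.mem_filter.mp hp).1
    have h2 : g q.1 = some q.2 := Mof_mem.mp (Finset.mem_filter.mp hq).1
    rw [he, h2] at h1
    exact Prod.ext he (Option.some.inj h1).symm
  · intro a ha
    simp only [mem_filter, mem_univ, true_and] at ha
    exact ⟨(a, c), by simp [Mof_mem, ha], rfl⟩

lemma Mof_row (g : A → Option C) (a : A) :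
    ((MofHRT g).filter fun p => p.1 = a).card ≤ 1 := by
  apply Finset.card_le_one.mpr
  intro p hp q hq
  have h1 : g p.1 = some p.2 := Mof_mem.mp (Finset.mem_filter.mp hp).1
  have h2 : g q.1 = some q.2 := Mof_mem.mp (Finset.mem_filter.mp hq).1
  have hp1 : p.1 = a := (Finset.mem_filter.mp hp).2
  have hq1 : q.1 = a := (Finset.mem_filter.mp hq).2
  rw [hp1] at h1
  rw [hq1] at h2
  rw [h2] at h1
  exact Prod.ext (hp1.trans hq1.symm) (Option.some.inj h1).symm

lemma Mof_part (g : A → Option C) (t : Finset A) :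
    ((MofHRT g).filter fun p => p.1 ∈ t).card = (matchedHRT g ∩ t).card := by
  apply Finset.card_bij (fun p _ => p.1)
  · intro p hp
    have h1 : g p.1 = some p.2 := Mof_mem.mp (Finset.mem_filter.mp hp).1
    have h2 : p.1 ∈ t := (Finset.mem_filter.mp hp).2
    simp [matchedHRT, h1, h2]
  · intro p hp q hq he
    have h1 : g p.1 = some p.2 := Mof_mem.mp (Finset.mem_filter.mp hp).1
    have h2 : g q.1 = some q.2 := Mof_mem.mp (Finset.mem_filter.mp hq).1
    rw [he, h2] at h1
    exact Prod.ext he (Option.some.inj h1).symm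
  · intro a ha
    simp only [mem_inter, matchedHRT, mem_filter, mem_univ, true_and] at ha
    obtain ⟨h1, h2⟩ := ha
    cases hga : g a with
    | none => exact absurd hga h1
    | some c => exact ⟨(a, c), by simp [Mof_mem, hga, h2], rfl⟩

theorem convertStable (u : C → ℕ) (pref : A → C → ℕ) (t1 : Finset A)
    (s' : A → C → ℤ) (κ : A → C → ℤ)
    (href : ∀ a b c, s' a c < s' b c → κ a c < κ b c)
    (g : A → Option C) (hst : GStable u pref κ g) (hfull : FullHRT u g) :
    IsMatching (univ : Finset (A × C)) u (MofHRT g) ∧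
    WeaklyStable (univ : Finset (A × C)) u pref s' (MofHRT g) ∧
    ((MofHRT g).filter fun p => p.1 ∈ t1).card = T1HRT t1 g ∧
    ((MofHRT g).filter fun p => p.1 ∉ t1).card + T1HRT t1 g = ∑ c, u c := by
  refine ⟨⟨Finset.subset_univ _, Mof_row g, ?_⟩, ?_, Mof_part g t1, ?_⟩
  · intro c
    rw [Mof_cnt g c, hfull c]
  · intro a c hblock
    obtain ⟨_, hnm, hprefs, hbad⟩ := hblock
    have hga : g a ≠ some c := fun h => hnm (Mof_mem.mpr h)
    have hpref : prefHRT pref a c (g a) := fun c' hc' => hprefs c' (Mof_mem.mpr hc')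
    obtain ⟨hcnt, hdom⟩ := hst a c hga hpref
    rcases hbad with hlt | ⟨h, hhM, hs⟩
    · rw [Mof_cnt g c] at hlt
      omega
    · have hhc : g h = some c := Mof_mem.mp hhM
      exact absurd (href h a c hs) (not_lt.mpr (le_of_lt (hdom h hhc)))
  · have e1 : ((MofHRT g).filter fun p => p.1 ∉ t1).card = (matchedHRT g ∩ t1ᶜ).card := by
      have := Mof_part g t1ᶜ
      simpa using this
    rw [e1]
    have e2 : (matchedHRT g ∩ t1ᶜ).card + (matchedHRT g ∩ t1).card = (matchedHRT g).card := by
      have h1 : matchedHRT g ∩ t1 = (matchedHRT g).filter (fun a => a ∈ t1) := by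
        ext a; simp [Finset.mem_filter, Finset.mem_inter, and_comm]
      have h2 : matchedHRT g ∩ t1ᶜ = (matchedHRT g).filter (fun a => ¬ a ∈ t1) := by
        ext a; simp [Finset.mem_filter, Finset.mem_inter, and_comm]
      rw [h1, h2, add_comm]
      exact Finset.card_filter_add_card_filter_not (fun a => a ∈ t1)
    have e3 : ∑ c, cntHRT g c = ∑ c, u c := Finset.sum_congr rfl (fun c _ => hfull c)
    have e4 := sum_cnt g
    unfold T1HRT
    omega


lemma keyLtHRT {B m1 m2 q1 q2 : ℤ} (hq1 : 0 ≤ q1) (h1B : q1 < B) (hq2 : 0 ≤ q2) (h2B : q2 < B)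
    (h : m1 < m2 ∨ (m1 = m2 ∧ q1 < q2)) : B * m1 + q1 < B * m2 + q2 := by
  rcases h with h | ⟨he, h⟩
  · have hB : 0 < B := by omega
    have h1 : B * (m1 + 1) ≤ B * m2 := mul_le_mul_of_nonneg_left (by omega) (le_of_lt hB)
    have h2 : B * (m1 + 1) = B * m1 + B := by ring
    omega
  · rw [he]
    omega

lemma keyInjHRT {B m1 m2 q1 q2 : ℤ} (hq1 : 0 ≤ q1) (h1B : q1 < B) (hq2 : 0 ≤ q2) (h2B : q2 < B)
    (h : B * m1 + q1 = B * m2 + q2) : q1 = q2 ∧ m1 = m2 := by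
  have hB : 0 < B := by omega
  have hmm : q1 = q2 := by
    rcases lt_trichotomy m1 m2 with hm | hm | hm
    · have := keyLtHRT hq1 h1B hq2 h2B (Or.inl hm)
      omega
    · rw [hm] at h; omega
    · have := keyLtHRT hq2 h2B hq1 h1B (Or.inl hm)
      omega
  refine ⟨hmm, ?_⟩
  rw [hmm] at h
  have : B * m1 = B * m2 := by omega
  exact mul_left_cancel₀ (ne_of_gt hB) this

def keyHRT (s' : A → C → ℤ) (K : Finset A) (ι : A → ℕ) (n : ℕ) (δ : ℤ) : A → C → ℤ :=
  fun a c => (2 * (n : ℤ) + 1) * (s' a c + (if a ∈ K then δ else 0))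
    + (if a ∈ K then 0 else (n : ℤ)) + (ι a : ℤ)

lemma keyHRT_q_bounds {K : Finset A} {ι : A → ℕ} {n : ℕ} (hι : ∀ a, ι a < n) (a : A) :
    0 ≤ (if a ∈ K then 0 else (n : ℤ)) + (ι a : ℤ) ∧
    (if a ∈ K then 0 else (n : ℤ)) + (ι a : ℤ) < 2 * (n : ℤ) + 1 := by
  have h := hι a
  split <;> constructor <;> omega

lemma keyHRT_inj (s' : A → C → ℤ) (K : Finset A) (ι : A → ℕ) (n : ℕ)
    (hι : ∀ a, ι a < n) (hιinj : ∀ a b, ι a = ι b → a = b) (δ : ℤ) :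
    ∀ c a b, keyHRT s' K ι n δ a c = keyHRT s' K ι n δ b c → a = b := by
  intro c a b h
  unfold keyHRT at h
  rw [add_assoc, add_assoc] at h
  obtain ⟨hq, -⟩ := keyInjHRT (keyHRT_q_bounds hι a).1 (keyHRT_q_bounds hι a).2
    (keyHRT_q_bounds hι b).1 (keyHRT_q_bounds hι b).2 h
  have ha := hι a
  have hb := hι b
  by_cases haK : a ∈ K <;> by_cases hbK : b ∈ K <;>
    simp only [haK, hbK, if_true, if_false] at hq
  · exact hιinj a b (by omega)
  · omega
  · omega
  · exact hιinj a b (by omega)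

lemma keyHRT_ref (s' : A → C → ℤ) (K : Finset A) (ι : A → ℕ) (n : ℕ)
    (hι : ∀ a, ι a < n) {δ : ℤ} (hδ0 : 0 ≤ δ) (hδ1 : δ ≤ 1) :
    ∀ a b c, s' a c < s' b c → keyHRT s' K ι n δ a c < keyHRT s' K ι n δ b c := by
  intro a b c hs
  unfold keyHRT
  rw [add_assoc, add_assoc]
  apply keyLtHRT (keyHRT_q_bounds hι a).1 (keyHRT_q_bounds hι a).2
    (keyHRT_q_bounds hι b).1 (keyHRT_q_bounds hι b).2
  have ha := hι a
  have hb := hι b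
  by_cases haK : a ∈ K <;> by_cases hbK : b ∈ K <;>
    simp only [haK, hbK, if_true, if_false] <;> omega

lemma keyHRT_agree (s' : A → C → ℤ) (K K' : Finset A) (ι : A → ℕ) (n : ℕ) (δ : ℤ) (y : A)
    (h : ∀ a, a ≠ y → (a ∈ K ↔ a ∈ K')) :
    ∀ a c, a ≠ y → keyHRT s' K' ι n δ a c = keyHRT s' K ι n δ a c := by
  intro a c hay
  unfold keyHRT
  rw [if_congr (iff_comm.mp (h a hay)) rfl rfl, if_congr (iff_comm.mp (h a hay)) rfl rfl]

lemma keyHRT_shift (s : A → C → ℤ) (t1 : Finset A) (ι : A → ℕ) (n : ℕ) (e : ℤ) :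
    keyHRT (fun a c => s a c + (if a ∈ t1 then e else 0)) t1 ι n 1
      = keyHRT (fun a c => s a c + (if a ∈ t1 then e + 1 else 0)) t1 ι n 0 := by
  funext a c
  unfold keyHRT
  by_cases h : a ∈ t1 <;> simp only [h, if_true, if_false] <;> ring

lemma keyHRT_delta_empty (s' : A → C → ℤ) (ι : A → ℕ) (n : ℕ) (δ δ' : ℤ) :
    keyHRT s' (∅ : Finset A) ι n δ = keyHRT s' (∅ : Finset A) ι n δ' := by
  funext a c
  unfold keyHRT
  simp


def ReachedHRT (u : C → ℕ) (pref : A → C → ℕ) (s : A → C → ℤ) (t1 : Finset A) (L1 : ℕ) : Prop :=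
  ∃ (e : ℤ) (κ : A → C → ℤ) (g : A → Option C),
    (∀ a b c, s a c + (if a ∈ t1 then e else 0) < s b c + (if b ∈ t1 then e else 0) →
      κ a c < κ b c) ∧
    GStable u pref κ g ∧ FullHRT u g ∧ T1HRT t1 g = L1

theorem reachHRT (u : C → ℕ) (pref : A → C → ℕ) (s : A → C → ℤ) (t1 : Finset A)
    (hpi : ∀ a c c', pref a c = pref a c' → c = c') (L1 L2 : ℕ)
    (hL1 : L1 ≤ t1.card) (hL2 : L2 ≤ t1ᶜ.card) (hLU : L1 + L2 = ∑ c, u c) :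
    ReachedHRT u pref s t1 L1 := by
  classical
  set n := Fintype.card A with hn
  set ι : A → ℕ := fun a => ((Fintype.equivFin A) a : ℕ) with hιdef
  have hι : ∀ a, ι a < n := fun a => (Fintype.equivFin A a).isLt
  have hιinj : ∀ a b, ι a = ι b → a = b := fun a b h =>
    (Fintype.equivFin A).injective (Fin.ext h)
  have hU : ∑ c, u c ≤ n := by
    have := Finset.card_add_card_compl t1
    omega
  set Smax := ∑ p : A × C, |s p.1 p.2| with hS
  have hSnn : 0 ≤ Smax := Finset.sum_nonneg (fun p _ => abs_nonneg _)
  have habs : ∀ a c, |s a c| ≤ Smax := fun a c =>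
    Finset.single_le_sum (f := fun p : A × C => |s p.1 p.2|) (fun p _ => abs_nonneg _)
      (mem_univ (a, c))
  -- matched count bookkeeping
  have hmcard : ∀ g : A → Option C, FullHRT u g → (matchedHRT g).card = ∑ c, u c := by
    intro g hfull
    rw [← sum_cnt]
    exact Finset.sum_congr rfl (fun c _ => hfull c)
  have hsplit : ∀ g : A → Option C,
      (matchedHRT g ∩ t1).card + (matchedHRT g ∩ t1ᶜ).card = (matchedHRT g).card := by
    intro g
    have h1 : matchedHRT g ∩ t1 = (matchedHRT g).filter (fun a => a ∈ t1) := by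
      ext a; simp [Finset.mem_filter, Finset.mem_inter]
    have h2 : matchedHRT g ∩ t1ᶜ = (matchedHRT g).filter (fun a => a ∉ t1) := by
      ext a; simp [Finset.mem_filter, Finset.mem_inter]
    rw [h1, h2]
    exact Finset.card_filter_add_card_filter_not (fun a => a ∈ t1)
  -- endpoint bounds for stable matchings at extreme bonuses
  have endMin : ∀ (κ : A → C → ℤ),
      (∀ a b c, s a c + (if a ∈ t1 then -(2*Smax+1) else 0)
          < s b c + (if b ∈ t1 then -(2*Smax+1) else 0) → κ a c < κ b c) →
      ∀ g, GStable u pref κ g → FullHRT u g → T1HRT t1 g ≤ L1 := by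
    intro κ href g hst hfull
    by_contra hT
    push_neg at hT
    unfold T1HRT at hT
    have hm := hmcard g hfull
    have hsp := hsplit g
    have hb : ∃ b, b ∈ t1ᶜ ∧ g b = none := by
      by_contra h
      push_neg at h
      have hsub : t1ᶜ ⊆ matchedHRT g ∩ t1ᶜ := by
        intro b hbc
        have hb2 := h b hbc
        simp only [mem_inter, matchedHRT, mem_filter, mem_univ, true_and]
        exact ⟨hb2, hbc⟩
      have := Finset.card_le_card hsub
      omega
    obtain ⟨b, hbc, hbnone⟩ := hb
    have hh : ∃ h c, h ∈ t1 ∧ g h = some c := by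
      have hpos : 0 < (matchedHRT g ∩ t1).card := by omega
      obtain ⟨h, hhm⟩ := Finset.card_pos.mp hpos
      rw [mem_inter] at hhm
      have h1 := hhm.1
      simp only [matchedHRT, mem_filter, mem_univ, true_and] at h1
      cases hgh : g h with
      | none => exact absurd hgh h1
      | some c => exact ⟨h, c, hhm.2, hgh⟩
    obtain ⟨h, c, hht1, hgh⟩ := hh
    have hdom := (hst b c (by rw [hbnone]; simp)
      (fun c' hc' => absurd hc' (by rw [hbnone]; simp))).2 h hgh
    have hadj : s h c + (if h ∈ t1 then -(2*Smax+1) else 0)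
        < s b c + (if b ∈ t1 then -(2*Smax+1) else 0) := by
      rw [if_pos hht1, if_neg (by simpa using hbc)]
      have h1 := abs_le.mp (habs h c)
      have h2 := abs_le.mp (habs b c)
      omega
    exact absurd (href h b c hadj) (not_lt.mpr (le_of_lt hdom))
  have endMax : ∀ (κ : A → C → ℤ),
      (∀ a b c, s a c + (if a ∈ t1 then (2*Smax+1) else 0)
          < s b c + (if b ∈ t1 then (2*Smax+1) else 0) → κ a c < κ b c) →
      ∀ g, GStable u pref κ g → FullHRT u g → L1 ≤ T1HRT t1 g := by
    intro κ href g hst hfull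
    by_contra hT
    push_neg at hT
    unfold T1HRT at hT
    have hm := hmcard g hfull
    have hsp := hsplit g
    have hb : ∃ b, b ∈ t1 ∧ g b = none := by
      by_contra h
      push_neg at h
      have hsub : t1 ⊆ matchedHRT g ∩ t1 := by
        intro b hbc
        have hb2 := h b hbc
        simp only [mem_inter, matchedHRT, mem_filter, mem_univ, true_and]
        exact ⟨hb2, hbc⟩
      have := Finset.card_le_card hsub
      omega
    obtain ⟨b, hbc, hbnone⟩ := hb
    have hh : ∃ h c, h ∈ t1ᶜ ∧ g h = some c := by
      have hpos : 0 < (matchedHRT g ∩ t1ᶜ).card := by omega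
      obtain ⟨h, hhm⟩ := Finset.card_pos.mp hpos
      rw [mem_inter] at hhm
      have h1 := hhm.1
      simp only [matchedHRT, mem_filter, mem_univ, true_and] at h1
      cases hgh : g h with
      | none => exact absurd hgh h1
      | some c => exact ⟨h, c, hhm.2, hgh⟩
    obtain ⟨h, c, hht2, hgh⟩ := hh
    have hdom := (hst b c (by rw [hbnone]; simp)
      (fun c' hc' => absurd hc' (by rw [hbnone]; simp))).2 h hgh
    have hadj : s h c + (if h ∈ t1 then (2*Smax+1) else 0)
        < s b c + (if b ∈ t1 then (2*Smax+1) else 0) := by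
      rw [if_neg (by simpa using hht2), if_pos hbc]
      have h1 := abs_le.mp (habs h c)
      have h2 := abs_le.mp (habs b c)
      omega
    exact absurd (href h b c hadj) (not_lt.mpr (le_of_lt hdom))
  -- the one-applicant step
  have step : ∀ (e : ℤ) (κ κ' : A → C → ℤ) (y : A),
      (∀ c a b, κ' a c = κ' b c → a = b) →
      (∀ a b c, s a c + (if a ∈ t1 then e else 0) < s b c + (if b ∈ t1 then e else 0) →
        κ a c < κ b c) →
      (∀ a c, a ≠ y → κ' a c = κ a c) →
      (ReachedHRT u pref s t1 L1 ∨
        ∃ g, GStable u pref κ g ∧ FullHRT u g ∧ T1HRT t1 g ≤ L1) →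
      (ReachedHRT u pref s t1 L1 ∨
        ∃ g, GStable u pref κ' g ∧ FullHRT u g ∧ T1HRT t1 g ≤ L1) := by
    intro e κ κ' y hκ' href hagree h
    rcases h with h | ⟨g, hst, hfull, hT⟩
    · exact Or.inl h
    obtain ⟨g', hst', hfull', hlo, hhi⟩ :=
      stableSwap u pref t1 κ κ' hκ' hpi y hagree hU g hst hfull
    by_cases hT' : T1HRT t1 g' ≤ L1
    · exact Or.inr ⟨g', hst', hfull', hT'⟩
    · exact Or.inl ⟨e, κ, g, href, hst, hfull, by omega⟩
  -- phase P : raise the score of each type-1 applicant by one, one applicant at a time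
  have phaseP : ∀ (e : ℤ) (K : Finset A),
      (ReachedHRT u pref s t1 L1 ∨
        ∃ g, GStable u pref
          (keyHRT (fun a c => s a c + (if a ∈ t1 then e else 0)) ∅ ι n 1) g ∧
          FullHRT u g ∧ T1HRT t1 g ≤ L1) →
      (ReachedHRT u pref s t1 L1 ∨
        ∃ g, GStable u pref
          (keyHRT (fun a c => s a c + (if a ∈ t1 then e else 0)) K ι n 1) g ∧
          FullHRT u g ∧ T1HRT t1 g ≤ L1) := by
    intro e K
    induction K using Finset.induction_on with
    | empty => exact id
    | @insert y K hyK ih =>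
      intro h
      refine step e _ _ y
        (keyHRT_inj _ _ ι n hι hιinj 1)
        (keyHRT_ref _ K ι n hι (by norm_num) (by norm_num))
        (keyHRT_agree _ K (insert y K) ι n 1 y
          (fun x hx => by simp [Finset.mem_insert, hx]))
        (ih h)
  -- phase Q : then adjust the tie-break of each type-1 applicant, one at a time
  have phaseQ : ∀ (e : ℤ) (K : Finset A),
      (ReachedHRT u pref s t1 L1 ∨
        ∃ g, GStable u pref
          (keyHRT (fun a c => s a c + (if a ∈ t1 then e else 0)) K ι n 0) g ∧
          FullHRT u g ∧ T1HRT t1 g ≤ L1) →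
      (ReachedHRT u pref s t1 L1 ∨
        ∃ g, GStable u pref
          (keyHRT (fun a c => s a c + (if a ∈ t1 then e else 0)) ∅ ι n 0) g ∧
          FullHRT u g ∧ T1HRT t1 g ≤ L1) := by
    intro e K
    induction K using Finset.strongInduction with
    | _ K ih =>
      rcases eq_or_ne K ∅ with rfl | hne
      · exact id
      · obtain ⟨y, hy⟩ := Finset.nonempty_iff_ne_empty.mpr hne
        intro h
        apply ih (K.erase y) (Finset.erase_ssubset hy)
        refine step e _ _ y
          (keyHRT_inj _ _ ι n hι hιinj 0)
          (keyHRT_ref _ K ι n hι (by norm_num) (by norm_num))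
          (keyHRT_agree _ K (K.erase y) ι n 0 y
            (fun x hx => by simp [Finset.mem_erase, hx]))
          h
  -- the walk over the bonus e
  have walk : ∀ k : ℕ,
      ReachedHRT u pref s t1 L1 ∨
      ∃ g, GStable u pref
        (keyHRT (fun a c => s a c + (if a ∈ t1 then (-(2*Smax+1) + (k : ℤ)) else 0)) ∅ ι n 1) g ∧
        FullHRT u g ∧ T1HRT t1 g ≤ L1 := by
    intro k
    induction k with
    | zero =>
      obtain ⟨g, hst, hfull⟩ := existsStable pref
        (keyHRT (fun a c => s a c + (if a ∈ t1 then (-(2*Smax+1) + ((0:ℕ) : ℤ)) else 0)) ∅ ι n 1)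
        (keyHRT_inj _ _ ι n hι hιinj 1) hpi (∑ c, u c) u hU (le_refl _)
      right
      refine ⟨g, hst, hfull, ?_⟩
      have he : (-(2*Smax+1) + ((0:ℕ) : ℤ)) = -(2*Smax+1) := by push_cast; ring
      rw [he] at hst
      exact endMin _ (keyHRT_ref _ ∅ ι n hι (by norm_num) (by norm_num)) g hst hfull
    | succ k ihk =>
      have h1 := phaseP (-(2*Smax+1) + (k : ℤ)) t1 ihk
      rw [keyHRT_shift s t1 ι n (-(2*Smax+1) + (k : ℤ))] at h1
      have h2 := phaseQ ((-(2*Smax+1) + (k : ℤ)) + 1) t1 h1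
      rw [keyHRT_delta_empty
        (fun a c => s a c + (if a ∈ t1 then ((-(2*Smax+1) + (k : ℤ)) + 1) else 0)) ι n 0 1] at h2
      have he : ((-(2*Smax+1) + (k : ℤ)) + 1) = (-(2*Smax+1) + ((k+1 : ℕ) : ℤ)) := by
        push_cast; ring
      rw [he] at h2
      exact h2
  -- conclude via the other endpoint
  rcases walk (2*(2*Smax+1)).toNat with hgood | ⟨g, hst, hfull, hT⟩
  · exact hgood
  · have he : (-(2*Smax+1) + (((2*(2*Smax+1)).toNat : ℕ) : ℤ)) = 2*Smax+1 := by
      rw [Int.toNat_of_nonneg (by omega)]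
      ring
    rw [he] at hst
    have hge := endMax _ (keyHRT_ref _ ∅ ι n hι (by norm_num) (by norm_num)) g hst hfull
    exact ⟨2*Smax+1, _, g,
      keyHRT_ref _ ∅ ι n hι (by norm_num) (by norm_num), hst, hfull, by omega⟩

end HRT

/-- Conjecture 3 of the paper (proved for two types): if every applicant-company pair is
mutually acceptable, the applicants are partitioned into type-1 applicants `t1` and
type-2 applicants `t1ᶜ`, and `L1 ≤ |t1|`, `L2 ≤ |t1ᶜ|`, `L1 + L2 = ∑ u c` are exact
overall type quotas, then there is an integer bonus `e` added to the score of every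
type-1 applicant at every company and a matching that is weakly stable for the adjusted
scores and matches exactly `L1` type-1 and exactly `L2` type-2 applicants. -/
theorem stable_matching_with_equal_type_specific_scores_exists
    (u : C → ℕ) (pref : A → C → ℕ) (s : A → C → ℤ) (t1 : Finset A)
    (hprefStrict : ∀ (a : A) (c c' : C), pref a c = pref a c' → c = c')
    (L1 L2 : ℕ)
    (hL1 : L1 ≤ t1.card) (hL2 : L2 ≤ t1ᶜ.card) (hLU : L1 + L2 = ∑ c : C, u c) :
    ∃ (e : ℤ) (M : Finset (A × C)),
      IsMatching Finset.univ u M ∧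
      WeaklyStable Finset.univ u pref
        (fun a c => s a c + if a ∈ t1 then e else 0) M ∧
      (M.filter (fun p => p.1 ∈ t1)).card = L1 ∧
      (M.filter (fun p => p.1 ∉ t1)).card = L2 := by
  obtain ⟨e, κ, g, href, hst, hfull, hT⟩ :=
    reachHRT u pref s t1 hprefStrict L1 L2 hL1 hL2 hLU
  obtain ⟨hM, hW, hc1, hc2⟩ := convertStable u pref t1
    (fun a c => s a c + if a ∈ t1 then e else 0) κ href g hst hfull
  exact ⟨e, MofHRT g, hM, hW, by rw [hc1, hT], by omega⟩
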